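/- Optimality transfer under matrix representation: if there exists an optimal [F, γ_0, n]_{q^m} FDRM code supported on F = [γ_0, …, γ_{n−1}] (optimal meaning its dimension γ_0 attains the Etzion–Silberstein bound with minimum rank distance equal to n, the full number of columns), then there exists an optimal [F', m γ_0, m n]_q FDRM code, where F' = [mγ_0 (repeated m times), mγ_1 (repeated m times), …, mγ_{n−1} (repeated m times)]. -/

import Mathlib

private noncomputable def stmt18Map {F K : Type*} [Field F] [Field K] [Algebra F K]
    {m mr n : ℕ} (hmpos : 0 < m) (b : Module.Basis (Fin m) F K) :
    Matrix (Fin mr) (Fin n) K →ₗ[F] Matrix (Fin (m * mr)) (Fin (m * n)) F where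
  toFun A := Matrix.of fun i' j' =>
    b.repr (A ⟨(i' : ℕ) / m, Nat.div_lt_of_lt_mul i'.2⟩
        ⟨(j' : ℕ) / m, Nat.div_lt_of_lt_mul j'.2⟩
      * b ⟨(j' : ℕ) % m, Nat.mod_lt _ hmpos⟩) ⟨(i' : ℕ) % m, Nat.mod_lt _ hmpos⟩
  map_add' A B := by
    ext i' j'
    simp [Matrix.add_apply, add_mul]
  map_smul' c A := by
    ext i' j'
    simp [Matrix.smul_apply, smul_mul_assoc]

private theorem stmt18Map_apply {F K : Type*} [Field F] [Field K] [Algebra F K]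
    {m mr n : ℕ} (hmpos : 0 < m) (b : Module.Basis (Fin m) F K)
    (A : Matrix (Fin mr) (Fin n) K) (i' : Fin (m * mr)) (j' : Fin (m * n)) :
    stmt18Map hmpos b A i' j' =
      b.repr (A ⟨(i' : ℕ) / m, Nat.div_lt_of_lt_mul i'.2⟩
          ⟨(j' : ℕ) / m, Nat.div_lt_of_lt_mul j'.2⟩
        * b ⟨(j' : ℕ) % m, Nat.mod_lt _ hmpos⟩) ⟨(i' : ℕ) % m, Nat.mod_lt _ hmpos⟩ := rfl

theorem stmt18 {F K : Type*} [Field F] [Field K] [Algebra F K]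
    {m mr n : ℕ} (hm : Module.finrank F K = m)
    (γ : ℕ → ℕ) (hmono : ∀ i j, i ≤ j → j < n → γ i ≤ γ j)
    (hγ0 : 1 ≤ γ 0) (hγm : ∀ j, j < n → γ j ≤ mr)
    (C : Submodule K (Matrix (Fin mr) (Fin n) K))
    (hdim : Module.finrank K C = γ 0)
    (hsupp : ∀ A ∈ C, ∀ (i : Fin mr) (j : Fin n), γ (j : ℕ) ≤ (i : ℕ) → A i j = 0)
    (hmin : ∀ A ∈ C, A ≠ 0 → n ≤ A.rank) :
    ∃ C' : Submodule F (Matrix (Fin (m * mr)) (Fin (m * n)) F),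
      Module.finrank F C' = m * γ 0 ∧
      (∀ A ∈ C', ∀ (i : Fin (m * mr)) (j : Fin (m * n)),
        m * γ ((j : ℕ) / m) ≤ (i : ℕ) → A i j = 0) ∧
      (∀ A ∈ C', A ≠ 0 → m * n ≤ A.rank) := by
  rcases Nat.eq_zero_or_pos m with hm0 | hmpos
  · refine ⟨⊥, ?_, ?_, ?_⟩
    · rw [hm0]; simp
    · intro A hA i j _
      rw [Submodule.mem_bot] at hA
      simp [hA]
    · intro A hA hA0
      rw [Submodule.mem_bot] at hA
      exact absurd hA hA0
  · haveI : FiniteDimensional F K := FiniteDimensional.of_finrank_pos (hm ▸ hmpos)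
    set b : Module.Basis (Fin m) F K := (Module.finBasis F K).reindex (finCongr hm) with hb
    have hrow : ∀ i' : Fin (m * mr), (i' : ℕ) / m < mr := fun i' =>
      Nat.div_lt_of_lt_mul i'.2
    have hcol : ∀ j' : Fin (m * n), (j' : ℕ) / m < n := fun j' =>
      Nat.div_lt_of_lt_mul j'.2
    have hmodlt : ∀ k : ℕ, k % m < m := fun k => Nat.mod_lt _ hmpos
    have hmk : ∀ (a c s : ℕ), a < c → s < m → m * a + s < m * c := by
      intro a c s hac hs
      calc m * a + s < m * a + m := by omega
        _ = m * (a + 1) := by ring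
        _ ≤ m * c := Nat.mul_le_mul_left m hac
    have hdiv : ∀ (a s : ℕ), s < m → (m * a + s) / m = a := by
      intro a s hs
      rw [Nat.mul_add_div hmpos, Nat.div_eq_of_lt hs, add_zero]
    have hmod : ∀ (a s : ℕ), s < m → (m * a + s) % m = s := by
      intro a s hs
      rw [Nat.mul_add_mod, Nat.mod_eq_of_lt hs]
    set Φ : Matrix (Fin mr) (Fin n) K →ₗ[F] Matrix (Fin (m * mr)) (Fin (m * n)) F :=
      stmt18Map hmpos b with hΦdef
    have hΦapp : ∀ (A : Matrix (Fin mr) (Fin n) K) (i' : Fin (m * mr)) (j' : Fin (m * n)),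
        Φ A i' j' = b.repr (A ⟨(i' : ℕ) / m, hrow i'⟩ ⟨(j' : ℕ) / m, hcol j'⟩
          * b ⟨(j' : ℕ) % m, hmodlt _⟩) ⟨(i' : ℕ) % m, hmodlt _⟩ :=
      fun A i' j' => stmt18Map_apply hmpos b A i' j' 
    have hΦ : ∀ (A : Matrix (Fin mr) (Fin n) K) (i : Fin mr) (s : Fin m) (j : Fin n) (t : Fin m),
        Φ A ⟨m * i + s, hmk _ _ _ i.2 s.2⟩ ⟨m * j + t, hmk _ _ _ j.2 t.2⟩
          = b.repr (A i j * b t) s := by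
      intro A i s j t
      rw [hΦapp]
      have e1 : (m * (i : ℕ) + s) / m = i := hdiv _ _ s.2
      have e2 : (m * (i : ℕ) + s) % m = (s : ℕ) := hmod _ _ s.2
      have e3 : (m * (j : ℕ) + t) / m = j := hdiv _ _ t.2
      have e4 : (m * (j : ℕ) + t) % m = (t : ℕ) := hmod _ _ t.2
      simp only [e1, e2, e3, e4, Fin.eta]
    have hΦ0 : ∀ A, Φ A = 0 → A = 0 := by
      intro A hA
      funext i j
      have hb0 : ∀ s : Fin m, b.repr (A i j * b ⟨0, hmpos⟩) s = 0 := by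
        intro s
        have h2 := hΦ A i s j ⟨0, hmpos⟩
        rw [hA] at h2
        simpa using h2.symm
      have hrz : b.repr (A i j * b ⟨0, hmpos⟩) = 0 := by
        ext s; simpa using hb0 s
      have hz : A i j * b ⟨0, hmpos⟩ = 0 := by
        simpa using (LinearEquiv.map_eq_zero_iff b.repr).mp hrz
      rcases mul_eq_zero.mp hz with h | h
      · simpa using h
      · exact absurd h (b.ne_zero _)
    have hΦinj : Function.Injective Φ := by
      rw [injective_iff_map_eq_zero Φ] at *
      exact hΦ0
    refine ⟨(C.restrictScalars F).map Φ, ?_, ?_, ?_⟩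
    · have e1 := (Submodule.equivMapOfInjective Φ hΦinj (C.restrictScalars F)).symm.finrank_eq
      have e2 := ((Submodule.restrictScalarsEquiv F K _ C).restrictScalars F).finrank_eq
      have e3 : Module.finrank F C = m * γ 0 := by
        rw [← Module.finrank_mul_finrank F K C, hm, hdim]
      rw [e1, e2, e3]
    · intro A' hA' i' j' hle
      obtain ⟨A, hAC, rfl⟩ := Submodule.mem_map.mp hA'
      have hAC' : A ∈ C := hAC
      have hzero : A ⟨(i' : ℕ) / m, hrow i'⟩ ⟨(j' : ℕ) / m, hcol j'⟩ = 0 := by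
        refine hsupp A hAC' _ _ ?_
        exact (Nat.le_div_iff_mul_le hmpos).mpr (by rw [mul_comm]; exact hle)
      rw [hΦapp, hzero, zero_mul, map_zero]
      rfl
    · intro A' hA' hne
      obtain ⟨A, hAC, rfl⟩ := Submodule.mem_map.mp hA'
      have hAC' : A ∈ C := hAC
      have hA0 : A ≠ 0 := fun h => hne (by rw [h, map_zero])
      have hrk : A.rank = n := le_antisymm (by simpa using A.rank_le_card_width)
        (hmin A hAC' hA0)
      have hcols : LinearIndependent K A.transpose := by
        refine linearIndependent_iff_card_eq_finrank_span.mpr ?_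
        rw [Fintype.card_fin]
        show n = Module.finrank K (Submodule.span K (Set.range A.transpose))
        exact hrk.symm.trans (Matrix.rank_eq_finrank_span_cols A)
      let e : Fin n × Fin m ≃ Fin (m * n) := finProdFinEquiv.trans (finCongr (mul_comm n m))
      have heq : ∀ (j : Fin n) (t : Fin m),
          e (j, t) = (⟨m * j + t, hmk _ _ _ j.2 t.2⟩ : Fin (m * n)) := by
        intro j t
        apply Fin.ext
        simp [e, finProdFinEquiv]
        omega
      have hind : LinearIndependent F (Φ A).transpose := by
        refine Fintype.linearIndependent_iff.mpr ?_
        intro g hg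
        set x : Fin n → K := fun j => ∑ t : Fin m, g (e (j, t)) • b t with hx
        have key : ∀ (i : Fin mr) (s : Fin m),
            ∑ j : Fin n, ∑ t : Fin m, g (e (j, t)) • b.repr (A i j * b t) s = 0 := by
          intro i s
          have hgi := congrFun hg ⟨m * i + s, hmk _ _ _ i.2 s.2⟩
          simp only [Finset.sum_apply, Pi.smul_apply, Matrix.transpose_apply,
            Pi.zero_apply, smul_eq_mul] at hgi
          calc ∑ j : Fin n, ∑ t : Fin m, g (e (j, t)) • b.repr (A i j * b t) s
              = ∑ p : Fin n × Fin m, g (e p) *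
                  Φ A ⟨m * i + s, hmk _ _ _ i.2 s.2⟩ (e p) := by
                rw [Fintype.sum_prod_type]
                refine Finset.sum_congr rfl fun j _ => Finset.sum_congr rfl fun t _ => ?_
                rw [heq j t, hΦ A i s j t, smul_eq_mul]
            _ = ∑ j' : Fin (m * n), g j' *
                  Φ A ⟨m * i + s, hmk _ _ _ i.2 s.2⟩ j' :=
                Fintype.sum_equiv e _ _ (fun p => rfl)
            _ = 0 := hgi
        have hxz : ∀ j, x j = 0 := by
          have hcomb : ∑ j : Fin n, x j • A.transpose j = 0 := by
            funext i
            simp only [Finset.sum_apply, Pi.smul_apply, Matrix.transpose_apply,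
              Pi.zero_apply, smul_eq_mul]
            have hrz : b.repr (∑ j : Fin n, x j * A i j) = 0 := by
              ext s
              show b.repr (∑ j : Fin n, x j * A i j) s = 0
              calc b.repr (∑ j : Fin n, x j * A i j) s
                  = ∑ j : Fin n, b.repr (x j * A i j) s := by
                    rw [map_sum, Finsupp.finset_sum_apply]
                _ = ∑ j : Fin n, ∑ t : Fin m,
                      g (e (j, t)) • b.repr (A i j * b t) s := by
                    refine Finset.sum_congr rfl fun j _ => ?_
                    have hxm : x j * A i j
                        = ∑ t : Fin m, g (e (j, t)) • (A i j * b t) := by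
                      rw [hx, Finset.sum_mul]
                      exact Finset.sum_congr rfl fun t _ => by
                        rw [smul_mul_assoc, mul_comm (b t)]
                    rw [hxm, map_sum, Finsupp.finset_sum_apply]
                    exact Finset.sum_congr rfl fun t _ => by
                      rw [map_smul, Finsupp.smul_apply]
                _ = 0 := key i s
            exact (LinearEquiv.map_eq_zero_iff b.repr).mp hrz
          intro j
          exact Fintype.linearIndependent_iff.mp hcols x hcomb j
        intro j'
        obtain ⟨⟨j, t⟩, rfl⟩ := e.surjective j'
        have hxj := hxz j
        rw [hx] at hxj
        exact Fintype.linearIndependent_iff.mp b.linearIndependent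
          (fun t => g (e (j, t))) hxj t
      have hrk' : (Φ A).rank = m * n := by
        have h1 := linearIndependent_iff_card_eq_finrank_span.mp hind
        rw [Fintype.card_fin] at h1
        rw [Matrix.rank_eq_finrank_span_cols]
        exact h1.symm
      exact hrk'.ge
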